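/- Let G be a graph with vertex partition V(G) = U ⊔ I such that I, N(I), N²(I), ..., N^t(I) are all independent sets in G. If G[U] admits a graph homomorphism to Γ, then G admits a graph homomorphism to the t-fold Mycielskian M_t(Γ). -/
import Mathlib


/-- Adjacency-generating relation for the `t`-fold Mycielskian.
Layers `1,…,t+1` are encoded by `Fin (t+1)` (layer `ℓ` is index `ℓ-1`),
and the extra root vertex `r` is `Sum.inr ()`. -/
def mycRel {V : Type*} (t : ℕ) (Γ : SimpleGraph V) :
    ((V × Fin (t + 1)) ⊕ Unit) → ((V × Fin (t + 1)) ⊕ Unit) → Prop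
  | Sum.inl (v, i), Sum.inl (w, j) =>
      Γ.Adj v w ∧ (((i : ℕ) = t ∧ (j : ℕ) = t) ∨ (j : ℕ) = (i : ℕ) + 1)
  | Sum.inl (_, i), Sum.inr _ => (i : ℕ) = 0
  | _, _ => False

/-- The `t`-fold Mycielskian `M_t(Γ)`. -/
def Myc {V : Type*} (t : ℕ) (Γ : SimpleGraph V) :
    SimpleGraph ((V × Fin (t + 1)) ⊕ Unit) :=
  SimpleGraph.fromRel (mycRel t Γ)

/-- The set of vertices of `G` at graph distance exactly `i` from the set `X`:
there is a walk of length `i` from `X`, and no shorter walk from `X`. -/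
def distSet {V : Type*} (G : SimpleGraph V) (X : Set V) (i : ℕ) : Set V :=
  {v | (∃ x ∈ X, ∃ w : G.Walk x v, w.length = i) ∧
       ∀ x ∈ X, ∀ w : G.Walk x v, i ≤ w.length}

/-- `S` is an independent set in `G`. -/
def IsIndep {V : Type*} (G : SimpleGraph V) (S : Set V) : Prop :=
  ∀ a ∈ S, ∀ b ∈ S, ¬ G.Adj a b

theorem stmt_2 {V W : Type*} (t : ℕ) (G : SimpleGraph V) (Γ : SimpleGraph W)
    (U I : Set V) (hpart : U ∪ I = Set.univ) (hdisj : Disjoint U I)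
    (hind : ∀ i ≤ t, IsIndep G (distSet G I i))
    (hhom : Nonempty (G.induce U →g Γ)) :
    Nonempty (G →g Myc t Γ) := by
  classical
  obtain ⟨f⟩ := hhom
  set S : V → Set ℕ := fun v => {n | ∃ x ∈ I, ∃ w : G.Walk x v, w.length = n} with hS
  have hUmem : ∀ v, v ∉ I → v ∈ U := by
    intro v hv
    have : v ∈ U ∪ I := hpart.symm ▸ Set.mem_univ v
    rcases this with h | h
    · exact h
    · exact absurd h hv
  have hRchI : ∀ v ∈ I, (S v).Nonempty ∧ sInf (S v) = 0 := by
    intro v hv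
    have hmem : (0 : ℕ) ∈ S v := ⟨v, hv, SimpleGraph.Walk.nil, rfl⟩
    exact ⟨⟨0, hmem⟩, Nat.le_antisymm (Nat.sInf_le hmem) (Nat.zero_le _)⟩
  have hstep : ∀ u v, G.Adj u v → (S u).Nonempty →
      (S v).Nonempty ∧ sInf (S v) ≤ sInf (S u) + 1 := by
    intro u v hadj hru
    obtain ⟨x, hx, w, hw⟩ := Nat.sInf_mem hru
    have hmem : sInf (S u) + 1 ∈ S v :=
      ⟨x, hx, w.concat hadj, by rw [SimpleGraph.Walk.length_concat, hw]⟩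
    exact ⟨⟨_, hmem⟩, Nat.sInf_le hmem⟩
  have hdistSet : ∀ v, (S v).Nonempty → v ∈ distSet G I (sInf (S v)) := by
    intro v hrv
    refine ⟨Nat.sInf_mem hrv, ?_⟩
    intro x hx w
    exact Nat.sInf_le ⟨x, hx, w, rfl⟩
  have hpos : ∀ v, v ∉ I → (S v).Nonempty → 1 ≤ sInf (S v) := by
    intro v hv hrv
    by_contra h
    have h0 : sInf (S v) = 0 := by omega
    obtain ⟨x, hx, w, hw⟩ := Nat.sInf_mem hrv
    rw [h0] at hw
    have := w.eq_of_length_eq_zero hw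
    exact hv (this ▸ hx)
  let layer : V → Fin (t + 1) := fun v =>
    ⟨if (S v).Nonempty ∧ sInf (S v) ≤ t then sInf (S v) - 1 else t,
      by split <;> omega⟩
  have hlayer : ∀ v, ((layer v : Fin (t+1)) : ℕ) =
      if (S v).Nonempty ∧ sInf (S v) ≤ t then sInf (S v) - 1 else t := fun v => rfl
  let F : V → (W × Fin (t + 1)) ⊕ Unit := fun v =>
    if hv : v ∈ I then Sum.inr () else Sum.inl (f ⟨v, hUmem v hv⟩, layer v)
  have hFI : ∀ v (hv : v ∈ I), F v = Sum.inr () := fun v hv => dif_pos hv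
  have hFU : ∀ v (hv : v ∉ I), F v = Sum.inl (f ⟨v, hUmem v hv⟩, layer v) :=
    fun v hv => dif_neg hv
  have key : ∀ u v, G.Adj u v → sInf (S u) ≤ sInf (S v) →
      (Myc t Γ).Adj (F u) (F v) := by
    intro u v hadj hle
    rw [Myc, SimpleGraph.fromRel_adj]
    by_cases hu : u ∈ I
    · by_cases hv : v ∈ I
      · exact absurd hadj (hind 0 (Nat.zero_le t) u
          ((hRchI u hu).2 ▸ hdistSet u (hRchI u hu).1)
          v ((hRchI v hv).2 ▸ hdistSet v (hRchI v hv).1))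
      · -- u ∈ I, v ∉ I
        have hru := (hRchI u hu).1
        have hrv := (hstep u v hadj hru).1
        have hv1 : sInf (S v) = 1 := by
          have h1 := (hstep u v hadj hru).2
          have h2 := hpos v hv hrv
          have h0 := (hRchI u hu).2
          omega
        have hl0 : ((layer v : Fin (t+1)) : ℕ) = 0 := by
          rw [hlayer]
          by_cases hbt : sInf (S v) ≤ t
          · rw [if_pos ⟨hrv, hbt⟩]; omega
          · rw [if_neg (fun hc => hbt hc.2)]; omega
        rw [hFI u hu, hFU v hv]
        refine ⟨by simp, Or.inr ?_⟩
        show ((layer v : Fin (t+1)) : ℕ) = 0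
        exact hl0
    · by_cases hv : v ∈ I
      · -- v ∈ I, u ∉ I : contradiction with hle
        have hru := (hstep v u hadj.symm (hRchI v hv).1).1
        have := hpos u hu hru
        have := (hRchI v hv).2
        omega
      · -- both outside I
        have hΓ : Γ.Adj (f ⟨u, hUmem u hu⟩) (f ⟨v, hUmem v hv⟩) :=
          f.map_adj (by simpa using hadj)
        have hne : (f ⟨u, hUmem u hu⟩) ≠ (f ⟨v, hUmem v hv⟩) := hΓ.ne
        rw [hFU u hu, hFU v hv]
        refine ⟨?_, ?_⟩
        · simp only [ne_eq, Sum.inl.injEq, Prod.mk.injEq, not_and]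
          intro h _
          exact hne h
        by_cases hru : (S u).Nonempty
        · have hrv := (hstep u v hadj hru).1
          have h1 : sInf (S v) ≤ sInf (S u) + 1 := (hstep u v hadj hru).2
          have ha1 : 1 ≤ sInf (S u) := hpos u hu hru
          have hb1 : 1 ≤ sInf (S v) := hpos v hv hrv
          rcases eq_or_lt_of_le hle with heq | hlt
          · by_cases hbt : sInf (S v) ≤ t
            · exact absurd hadj (hind (sInf (S v)) hbt u
                (heq ▸ hdistSet u hru) v (hdistSet v hrv))
            · refine Or.inl ⟨hΓ, Or.inl ⟨?_, ?_⟩⟩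
              · rw [hlayer, if_neg (fun hc => hbt (heq ▸ hc.2))]
              · rw [hlayer, if_neg (fun hc => hbt hc.2)]
          · -- sInf (S v) = sInf (S u) + 1
            have hb : sInf (S v) = sInf (S u) + 1 := by omega
            by_cases hbt : sInf (S v) ≤ t
            · refine Or.inl ⟨hΓ, Or.inr ?_⟩
              have hat : sInf (S u) ≤ t := by omega
              rw [hlayer v, hlayer u, if_pos ⟨hrv, hbt⟩, if_pos ⟨hru, hat⟩]
              omega
            · by_cases hat : sInf (S u) ≤ t
              · refine Or.inl ⟨hΓ, Or.inr ?_⟩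
                rw [hlayer v, hlayer u,
                  if_neg (fun hc : (S v).Nonempty ∧ sInf (S v) ≤ t => hbt hc.2),
                  if_pos ⟨hru, hat⟩]
                omega
              · refine Or.inl ⟨hΓ, Or.inl ⟨?_, ?_⟩⟩
                · rw [hlayer, if_neg (fun hc => hat hc.2)]
                · rw [hlayer, if_neg (fun hc => hbt hc.2)]
        · have hrv : ¬ (S v).Nonempty := fun h =>
            hru (hstep v u hadj.symm h).1
          refine Or.inl ⟨hΓ, Or.inl ⟨?_, ?_⟩⟩
          · rw [hlayer, if_neg (fun hc => hru hc.1)]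
          · rw [hlayer, if_neg (fun hc => hrv hc.1)]
  refine ⟨⟨F, ?_⟩⟩
  intro u v hadj
  rcases le_total (sInf (S u)) (sInf (S v)) with h | h
  · exact key u v hadj h
  · exact (key v u hadj.symm h).symm
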